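/- Fix a distribution D on a finite set X, a concept class C, reals ε, δ, η > 0 with η ≤ 1, and integers n < m. Let A be a randomized learner using n samples, and let A′ := A ∘ Φ_{m→n} be the learner using m samples that first applies the subsampling filter Φ_{m→n} and then runs A on the result. If A′ (ε, δ)-learns C over D with η-fixed-rate nasty noise, then A′ (ε, δ + n/√m + n/m)-learns C over D with η-nasty noise. -/

import Mathlib

open scoped ENNReal

/-- `Pr_{x ~ D}[h x ≠ c x]`: the error rate of hypothesis `h` w.r.t. the target
concept `c` under the distribution `D`. -/
noncomputable def errD {X : Type*} (D : PMF X) (h c : X → Bool) : ℝ≥0∞ :=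
  ∑' x, if h x = c x then 0 else D x

/-- Expectation of `f` under the pmf `p`. -/
noncomputable def pmfExp {α : Type*} (p : PMF α) (f : α → ℝ≥0∞) : ℝ≥0∞ :=
  ∑' a, p a * f a

/-- The distribution `D_c` of a labeled example `(x, c x)` with `x ~ D`. -/
noncomputable def labeled {X : Type*} (D : PMF X) (c : X → Bool) : PMF (X × Bool) :=
  D.map fun x => (x, c x)

/-- The `Binomial(m, η)` probability of the outcome `j`. -/
noncomputable def binomProb (m : ℕ) (η : ℝ) (j : ℕ) : ℝ≥0∞ :=
  (m.choose j : ℝ≥0∞) * ENNReal.ofReal η ^ j * ENNReal.ofReal (1 - η) ^ (m - j)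

/-- An `η`-nasty-noise strategy against `m` samples, for distribution `D` and concept `c`:
a joint distribution `μ` of a triple `(S, Z, S')` such that the marginal law of `S` is that
of `m` i.i.d. draws from `D_c`, the marginal law of `|Z|` is `Binomial(m, η)`, and almost
surely `S'ᵢ = Sᵢ` for every `i ∉ Z`. -/
structure NastyStrategy {X : Type*} (D : PMF X) (c : X → Bool) (η : ℝ) (m : ℕ) where
  μ : PMF ((Fin m → X × Bool) × Finset (Fin m) × (Fin m → X × Bool))
  marg_clean : ∀ s : Fin m → X × Bool, μ.map (fun t => t.1) s = ∏ i, labeled D c (s i)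
  marg_card : ∀ j : ℕ, μ.map (fun t => t.2.1.card) j = binomProb m η j
  consistent : ∀ t ∈ μ.support, ∀ i : Fin m, i ∉ t.2.1 → t.2.2 i = t.1 i

/-- A randomized learner using `m` samples: it maps a labeled data set to a
distribution over hypotheses. -/
abbrev Learner (X : Type*) (m : ℕ) := (Fin m → X × Bool) → PMF (X → Bool)

/-- `A` learns `𝒞` with expected error at most `ε` over `D` with `η`-nasty noise. -/
def LearnsExpErr {X : Type*} (D : PMF X) (𝒞 : Set (X → Bool)) {m : ℕ}
    (A : Learner X m) (η ε : ℝ) : Prop :=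
  ∀ c ∈ 𝒞, ∀ st : NastyStrategy D c η m,
    pmfExp st.μ (fun t => pmfExp (A t.2.2) fun h => errD D h c) ≤ ENNReal.ofReal ε

/-- An `η`-fixed-rate-nasty-noise strategy against `m` samples: identical to an
`η`-nasty-noise strategy, except that almost surely `|Z| = ⌊η·m⌋` exactly. -/
structure FixedNastyStrategy {X : Type*} (D : PMF X) (c : X → Bool) (η : ℝ) (m : ℕ) where
  μ : PMF ((Fin m → X × Bool) × Finset (Fin m) × (Fin m → X × Bool))
  marg_clean : ∀ s : Fin m → X × Bool, μ.map (fun t => t.1) s = ∏ i, labeled D c (s i)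
  card_eq : ∀ t ∈ μ.support, t.2.1.card = Nat.floor (η * m)
  consistent : ∀ t ∈ μ.support, ∀ i : Fin m, i ∉ t.2.1 → t.2.2 i = t.1 i

/-- `B` `(ε, δ)`-learns `𝒞` over `D` with `η`-nasty noise. -/
def LearnsPAC {X : Type*} (D : PMF X) (𝒞 : Set (X → Bool)) {m : ℕ}
    (B : Learner X m) (η ε δ : ℝ) : Prop :=
  ∀ c ∈ 𝒞, ∀ st : NastyStrategy D c η m,
    (st.μ.bind fun t => B t.2.2).toOuterMeasure {h : X → Bool | ENNReal.ofReal ε < errD D h c}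
      ≤ ENNReal.ofReal δ

/-- `B` `(ε, δ)`-learns `𝒞` over `D` with `η`-fixed-rate nasty noise. -/
def LearnsPACFixed {X : Type*} (D : PMF X) (𝒞 : Set (X → Bool)) {m : ℕ}
    (B : Learner X m) (η ε δ : ℝ) : Prop :=
  ∀ c ∈ 𝒞, ∀ st : FixedNastyStrategy D c η m,
    (st.μ.bind fun t => B t.2.2).toOuterMeasure {h : X → Bool | ENNReal.ofReal ε < errD D h c}
      ≤ ENNReal.ofReal δ

/-- The subsampling filter `Φ_{m→n}`: choose a uniformly random `n`-element subset of
the positions `{1,…,m}` and return the corresponding length-`n` subsequence of `T`. -/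
noncomputable def subsample {α : Type*} {m n : ℕ} (h : n ≤ m) (T : Fin m → α) :
    PMF (Fin n → α) :=
  haveI : Nonempty {s : Finset (Fin m) // s.card = n} := by
    obtain ⟨t, -, ht⟩ :=
      Finset.exists_subset_card_eq (s := (Finset.univ : Finset (Fin m))) (n := n) (by simpa using h)
    exact ⟨⟨t, ht⟩⟩
  (PMF.uniformOfFintype {s : Finset (Fin m) // s.card = n}).map
    fun s j => T (s.1.orderIsoOfFin s.2 j).1


section Helpers
open Finset


lemma binom_sum0 (N : ℕ) (x y : ℝ) :
    ∑ j ∈ range (N+1), (N.choose j : ℝ) * x^j * y^(N-j) = (x+y)^N := by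
  rw [add_pow]
  refine Finset.sum_congr rfl fun j hj => by ring

lemma binom_sum1 (N : ℕ) (x y : ℝ) :
    ∑ j ∈ range (N+1), (j : ℝ) * (N.choose j) * x^j * y^(N-j)
      = N * x * (x+y)^(N-1) := by
  cases N with
  | zero => simp
  | succ M =>
    rw [Finset.sum_range_succ']
    simp only [Nat.cast_zero, zero_mul, add_zero]
    have : ∀ i ∈ range (M+1),
        ((i+1 : ℕ) : ℝ) * ((M+1).choose (i+1)) * x^(i+1) * y^(M+1-(i+1))
          = (M+1 : ℝ) * x * ((M.choose i : ℝ) * x^i * y^(M-i)) := by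
      intro i hi
      have h := Nat.add_one_mul_choose_eq M i
      have h' : ((M+1) * M.choose i : ℝ) = ((M+1).choose (i+1) * (i+1) : ℕ) := by
        exact_mod_cast congrArg (Nat.cast (R := ℝ)) h
      push_cast at h' ⊢
      linear_combination (-(x^(i+1)*(y:ℝ)^(M-i)))*h'
    rw [Finset.sum_congr rfl this, ← Finset.mul_sum, binom_sum0]
    push_cast
    ring_nf

lemma binom_sum2 (N : ℕ) (x y : ℝ) (hxy : x + y = 1) :
    ∑ j ∈ range (N+1), (j : ℝ) * ((j : ℝ) - 1) * (N.choose j) * x^j * y^(N-j)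
      = N * ((N:ℝ)-1) * x^2 := by
  cases N with
  | zero => simp
  | succ M =>
    rw [Finset.sum_range_succ']
    simp only [Nat.cast_zero, zero_mul, add_zero]
    have : ∀ i ∈ range (M+1),
        ((i+1 : ℕ) : ℝ) * (((i+1:ℕ):ℝ) - 1) * ((M+1).choose (i+1)) * x^(i+1) * y^(M+1-(i+1))
          = (M+1 : ℝ) * x * ((i:ℝ) * (M.choose i : ℝ) * x^i * y^(M-i)) := by
      intro i hi
      have h := Nat.add_one_mul_choose_eq M i
      have h' : ((M+1) * M.choose i : ℝ) = ((M+1).choose (i+1) * (i+1) : ℕ) := by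
        exact_mod_cast congrArg (Nat.cast (R := ℝ)) h
      push_cast at h' ⊢
      linear_combination (-((i:ℝ)*x^(i+1)*(y:ℝ)^(M-i)))*h'
    rw [Finset.sum_congr rfl this, ← Finset.mul_sum, binom_sum1, hxy]
    push_cast
    ring_nf

lemma binom_exp_bound (m k : ℕ) (η : ℝ) (hη0 : 0 ≤ η) (hη1 : η ≤ 1) (hk : η * m ≤ k + 1) :
    ∑ j ∈ range (m+1), (m.choose j : ℝ) * η^j * (1-η)^(m-j) * ((j - k : ℕ) : ℝ)
      ≤ Real.sqrt m + 1 := by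
  have hone : η + (1-η) = 1 := by ring
  have hy0 : (0:ℝ) ≤ 1 - η := by linarith
  set b : ℕ → ℝ := fun j => (m.choose j : ℝ) * η^j * (1-η)^(m-j) with hb
  have hbnn : ∀ j, 0 ≤ b j := fun j =>
    mul_nonneg (mul_nonneg (Nat.cast_nonneg _) (pow_nonneg hη0 _)) (pow_nonneg hy0 _)
  have hsum0 : ∑ j ∈ range (m+1), b j = 1 := by
    rw [hb, binom_sum0, hone, one_pow]
  have hS1 : ∑ j ∈ range (m+1), (j:ℝ) * b j = m * η := by
    have := binom_sum1 m η (1-η)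
    rw [hone, one_pow, mul_one] at this
    rw [← this]; exact Finset.sum_congr rfl fun j _ => by rw [hb]; ring
  have hS2 : ∑ j ∈ range (m+1), (j:ℝ) * ((j:ℝ)-1) * b j = m * ((m:ℝ)-1) * η^2 := by
    have := binom_sum2 m η (1-η) hone
    rw [← this]; exact Finset.sum_congr rfl fun j _ => by rw [hb]; ring
  have hvar : ∑ j ∈ range (m+1), b j * ((j:ℝ) - η*m)^2 = m*η*(1-η) := by
    have e : ∀ j ∈ range (m+1), b j * ((j:ℝ) - η*m)^2
        = ((j:ℝ) * ((j:ℝ)-1) * b j) + (1 - 2*η*m) * ((j:ℝ) * b j) + (η*m)^2 * b j := by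
      intro j _; ring
    rw [Finset.sum_congr rfl e, Finset.sum_add_distrib, Finset.sum_add_distrib,
      ← Finset.mul_sum, ← Finset.mul_sum, hS2, hS1, hsum0]
    ring
  have habs : ∑ j ∈ range (m+1), b j * |(j:ℝ) - η*m| ≤ Real.sqrt m := by
    have hcs := Finset.sum_mul_sq_le_sq_mul_sq (range (m+1))
      (fun j => Real.sqrt (b j)) (fun j => Real.sqrt (b j) * |(j:ℝ) - η*m|)
    have e1 : ∑ j ∈ range (m+1), Real.sqrt (b j) * (Real.sqrt (b j) * |(j:ℝ) - η*m|)
        = ∑ j ∈ range (m+1), b j * |(j:ℝ) - η*m| :=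
      Finset.sum_congr rfl fun j _ => by
        rw [← mul_assoc, Real.mul_self_sqrt (hbnn j)]
    have e2 : ∑ j ∈ range (m+1), Real.sqrt (b j) ^ 2 = 1 := by
      rw [← hsum0]; exact Finset.sum_congr rfl fun j _ => Real.sq_sqrt (hbnn j)
    have e3 : ∑ j ∈ range (m+1), (Real.sqrt (b j) * |(j:ℝ) - η*m|) ^ 2 = m*η*(1-η) := by
      rw [← hvar]
      exact Finset.sum_congr rfl fun j _ => by
        rw [mul_pow, Real.sq_sqrt (hbnn j), sq_abs]
    rw [e1, e2, e3, one_mul] at hcs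
    have hnn : 0 ≤ ∑ j ∈ range (m+1), b j * |(j:ℝ) - η*m| :=
      Finset.sum_nonneg fun j _ => mul_nonneg (hbnn j) (abs_nonneg _)
    calc ∑ j ∈ range (m+1), b j * |(j:ℝ) - η*m|
        ≤ Real.sqrt (m*η*(1-η)) := (Real.le_sqrt hnn (by nlinarith)).mpr hcs
      _ ≤ Real.sqrt m := Real.sqrt_le_sqrt (by nlinarith)
  have hstep : ∀ j ∈ range (m+1), b j * ((j - k : ℕ) : ℝ) ≤ b j * (|(j:ℝ) - η*m| + 1) := by
    intro j _
    refine mul_le_mul_of_nonneg_left ?_ (hbnn j)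
    rcases le_or_gt j k with h | h
    · rw [Nat.sub_eq_zero_of_le h]
      simp only [Nat.cast_zero]
      positivity
    · have : ((j - k : ℕ) : ℝ) = (j:ℝ) - k := by
        have := Nat.cast_sub (le_of_lt h) (R := ℝ); exact this
      rw [this]
      have : (j:ℝ) - η*m ≤ |(j:ℝ) - η*m| := le_abs_self _
      linarith
  show ∑ j ∈ range (m+1), b j * ((j - k : ℕ) : ℝ) ≤ Real.sqrt m + 1
  calc ∑ j ∈ range (m+1), b j * ((j - k : ℕ) : ℝ)
      ≤ ∑ j ∈ range (m+1), b j * (|(j:ℝ) - η*m| + 1) := Finset.sum_le_sum hstep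
    _ = (∑ j ∈ range (m+1), b j * |(j:ℝ) - η*m|) + ∑ j ∈ range (m+1), b j := by
        rw [← Finset.sum_add_distrib]
        exact Finset.sum_congr rfl fun j _ => by ring
    _ = (∑ j ∈ range (m+1), b j * |(j:ℝ) - η*m|) + 1 := by rw [hsum0]
    _ ≤ Real.sqrt m + 1 := by linarith



lemma card_subtype_finsets (m n : ℕ) :
    Fintype.card {s : Finset (Fin m) // s.card = n} = m.choose n := by
  rw [Fintype.card_subtype]
  have : (Finset.univ.filter fun s : Finset (Fin m) => s.card = n)
      = Finset.powersetCard n Finset.univ := by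
    rw [Finset.powersetCard_eq_filter, Finset.powerset_univ]
  rw [this, Finset.card_powersetCard, Finset.card_univ, Fintype.card_fin]

lemma card_mem_filter_le (m n : ℕ) (hn : 1 ≤ n) (i : Fin m) :
    (Finset.univ.filter fun s : {s : Finset (Fin m) // s.card = n} => i ∈ s.1).card
      ≤ (m-1).choose (n-1) := by
  have hi : i ∈ (Finset.univ : Finset (Fin m)) := Finset.mem_univ i
  have hcard : ((Finset.univ : Finset (Fin m)).erase i).card = m - 1 := by
    rw [Finset.card_erase_of_mem hi, Finset.card_univ, Fintype.card_fin]
  calc (Finset.univ.filter fun s : {s : Finset (Fin m) // s.card = n} => i ∈ s.1).card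
      ≤ (Finset.powersetCard (n-1) ((Finset.univ : Finset (Fin m)).erase i)).card := by
        apply Finset.card_le_card_of_injOn (fun s => s.1.erase i)
        · intro s hs
          simp only [Finset.coe_filter, Finset.mem_filter, Set.mem_setOf_eq] at hs
          rw [Finset.mem_coe, Finset.mem_powersetCard]
          refine ⟨fun x hx => ?_, by rw [Finset.card_erase_of_mem hs.2, s.2]⟩
          rw [Finset.mem_erase] at hx ⊢
          exact ⟨hx.1, Finset.mem_univ _⟩
        · intro s hs t ht hst
          simp only [Finset.coe_filter, Set.mem_setOf_eq] at hs ht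
          ext1
          rw [← Finset.insert_erase hs.2, ← Finset.insert_erase ht.2]
          exact congrArg (insert i) hst
    _ = (m-1).choose (n-1) := by rw [Finset.card_powersetCard, hcard]

lemma uniform_mem_prob (m n : ℕ) (hn : n ≤ m) (hm : 1 ≤ m)
    [Nonempty {s : Finset (Fin m) // s.card = n}] (i : Fin m) :
    (PMF.uniformOfFintype {s : Finset (Fin m) // s.card = n}).toOuterMeasure
      {s : {s : Finset (Fin m) // s.card = n} | i ∈ s.1} ≤ (n : ℝ≥0∞) / m := by
  classical
  set ST := {s : Finset (Fin m) // s.card = n}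
  have key : (Finset.univ.filter fun s : ST => i ∈ s.1).card * m ≤ n * m.choose n := by
    rcases Nat.eq_zero_or_pos n with h0 | hpos
    · have : (Finset.univ.filter fun s : ST => i ∈ s.1) = ∅ := by
        apply Finset.filter_false_of_mem
        intro s _ his
        have hz : (s.1 : Finset (Fin m)) = ∅ := Finset.card_eq_zero.mp (s.2.trans h0)
        rw [hz] at his
        simp at his
      simp [this]
    · have h1 := card_mem_filter_le m n hpos i
      have h2 : m * (m-1).choose (n-1) = m.choose n * n := by
        have := Nat.add_one_mul_choose_eq (m-1) (n-1)
        have hm' : m - 1 + 1 = m := Nat.succ_pred_eq_of_pos hm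
        have hn' : n - 1 + 1 = n := Nat.succ_pred_eq_of_pos hpos
        rw [hm', hn'] at this
        exact this
      calc (Finset.univ.filter fun s : ST => i ∈ s.1).card * m
          ≤ (m-1).choose (n-1) * m := Nat.mul_le_mul_right _ h1
        _ = n * m.choose n := by rw [mul_comm, h2, mul_comm]
  have hcne : m.choose n ≠ 0 := Nat.choose_pos hn |>.ne'
  have hmne : m ≠ 0 := by omega
  rw [PMF.toOuterMeasure_apply, tsum_fintype]
  have e : ∀ s : ST, ({t : ST | i ∈ t.1}).indicator (⇑(PMF.uniformOfFintype ST)) s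
      = if i ∈ s.1 then ((m.choose n : ℝ≥0∞))⁻¹ else 0 := by
    intro s
    rw [Set.indicator_apply]
    simp only [Set.mem_setOf_eq]
    by_cases h : i ∈ s.1
    · rw [if_pos h, if_pos h, PMF.uniformOfFintype_apply]
      congr 1
      exact_mod_cast card_subtype_finsets m n
    · rw [if_neg h, if_neg h]
  rw [Finset.sum_congr rfl fun s _ => e s, ← Finset.sum_filter, Finset.sum_const,
    nsmul_eq_mul]
  have hcc : ((m.choose n : ℕ):ℝ≥0∞) * ((m.choose n : ℕ):ℝ≥0∞)⁻¹ = 1 :=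
    ENNReal.mul_inv_cancel (by exact_mod_cast hcne) (ENNReal.natCast_ne_top _)
  have ha : (((Finset.univ.filter fun s : ST => i ∈ s.1).card : ℕ):ℝ≥0∞)
      ≤ (n:ℝ≥0∞) * (m.choose n) / m :=
    (ENNReal.le_div_iff_mul_le (Or.inl (by exact_mod_cast hmne))
      (Or.inl (ENNReal.natCast_ne_top m))).mpr (by exact_mod_cast key)
  calc (((Finset.univ.filter fun s : ST => i ∈ s.1).card : ℕ):ℝ≥0∞)
        * ((m.choose n : ℕ):ℝ≥0∞)⁻¹
      ≤ ((n:ℝ≥0∞) * (m.choose n) / m) * ((m.choose n : ℕ):ℝ≥0∞)⁻¹ :=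
        mul_le_mul_left ha _
    _ = (n : ℝ≥0∞) / m := by
        rw [div_eq_mul_inv, mul_right_comm (n:ℝ≥0∞) ((m.choose n : ℕ):ℝ≥0∞) ((m:ℝ≥0∞))⁻¹,
          mul_assoc, hcc, mul_one, div_eq_mul_inv]


lemma pmf_measure_le_one {α : Type*} (p : PMF α) (E : Set α) : p.toOuterMeasure E ≤ 1 := by
  rw [PMF.toOuterMeasure_apply, ← p.tsum_coe]
  exact ENNReal.tsum_le_tsum fun a => Set.indicator_le_self _ _ a

lemma pmf_map_exp {α β : Type*} (p : PMF α) (g : α → β) (f : β → ℝ≥0∞) :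
    ∑' a, p a * f (g a) = ∑' b, (p.map g) b * f b := by
  classical
  have : ∀ b, (p.map g) b * f b = ∑' a, (if b = g a then p a else 0) * f b := by
    intro b
    rw [PMF.map_apply, ENNReal.tsum_mul_right]
  rw [tsum_congr this, ENNReal.tsum_comm]
  refine tsum_congr fun a => ?_
  rw [tsum_eq_single (g a) (fun b hb => by rw [if_neg (by exact hb), zero_mul]), if_pos rfl]

lemma binomProb_exp_bound (m k : ℕ) (η : ℝ) (hη0 : 0 ≤ η) (hη1 : η ≤ 1)
    (hk : η * m ≤ k + 1) :
    ∑' j : ℕ, binomProb m η j * ((j - k : ℕ) : ℝ≥0∞)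
      ≤ ENNReal.ofReal (Real.sqrt m + 1) := by
  have hy0 : (0:ℝ) ≤ 1 - η := by linarith
  have hz : ∀ j ∉ range (m+1), binomProb m η j * ((j-k:ℕ):ℝ≥0∞) = 0 := by
    intro j hj
    have : m < j := by simpa using hj
    simp [binomProb, Nat.choose_eq_zero_of_lt this]
  rw [tsum_eq_sum hz]
  have e : ∀ j ∈ range (m+1), binomProb m η j * ((j-k:ℕ):ℝ≥0∞)
      = ENNReal.ofReal ((m.choose j : ℝ) * η^j * (1-η)^(m-j) * ((j-k:ℕ):ℝ)) := by
    intro j _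
    rw [binomProb, ← ENNReal.ofReal_natCast (m.choose j), ← ENNReal.ofReal_pow hη0,
      ← ENNReal.ofReal_pow hy0, ← ENNReal.ofReal_natCast (j-k),
      ← ENNReal.ofReal_mul (by positivity), ← ENNReal.ofReal_mul (by positivity),
      ← ENNReal.ofReal_mul (by positivity)]
  rw [Finset.sum_congr rfl e, ← ENNReal.ofReal_sum_of_nonneg (fun j _ => by positivity)]
  exact ENNReal.ofReal_le_ofReal (binom_exp_bound m k η hη0 hη1 hk)

lemma subsample_compare {X : Type*} {m n : ℕ} (hn : n ≤ m) (hm : 1 ≤ m)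
    (A : Learner X n) (T T' : Fin m → X × Bool) (Δ : Finset (Fin m))
    (hΔ : ∀ i, T i ≠ T' i → i ∈ Δ) (E : Set (X → Bool)) :
    ((subsample hn T).bind A).toOuterMeasure E
      ≤ ((subsample hn T').bind A).toOuterMeasure E
        + (Δ.card : ℝ≥0∞) * ((n : ℝ≥0∞) / m) := by
  classical
  haveI inst : Nonempty {s : Finset (Fin m) // s.card = n} := by
    obtain ⟨t, -, ht⟩ :=
      Finset.exists_subset_card_eq (s := (Finset.univ : Finset (Fin m))) (n := n) (by simpa using hn)
    exact ⟨⟨t, ht⟩⟩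
  set ST := {s : Finset (Fin m) // s.card = n} with hST
  set u := PMF.uniformOfFintype ST with hu
  set f : (Fin m → X × Bool) → ST → (Fin n → X × Bool) :=
    fun T s j => T (s.1.orderIsoOfFin s.2 j).1 with hf
  have hsub : ∀ T : Fin m → X × Bool,
      ((subsample hn T).bind A).toOuterMeasure E
        = ∑' s : ST, u s * (A (f T s)).toOuterMeasure E := by
    intro T
    have h1 : subsample hn T = u.map (f T) := rfl
    rw [h1, PMF.bind_map, PMF.toOuterMeasure_bind_apply]
    rfl
  rw [hsub, hsub]
  have hind : ∀ s : ST, u s * (A (f T s)).toOuterMeasure E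
      ≤ u s * (A (f T' s)).toOuterMeasure E
        + u s * (∑ i ∈ Δ, if i ∈ s.1 then (1:ℝ≥0∞) else 0) := by
    intro s
    by_cases hd : ∀ i ∈ s.1, T i = T' i
    · have : f T s = f T' s := funext fun j => hd _ (s.1.orderIsoOfFin s.2 j).2
      rw [this]
      exact le_self_add
    · push_neg at hd
      obtain ⟨i0, hi0s, hi0⟩ := hd
      have h1 : (1:ℝ≥0∞) ≤ ∑ i ∈ Δ, if i ∈ s.1 then (1:ℝ≥0∞) else 0 := by
        have := Finset.single_le_sum (f := fun i => if i ∈ s.1 then (1:ℝ≥0∞) else 0)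
          (fun i _ => by positivity) (hΔ i0 hi0)
        simpa [hi0s] using this
      calc u s * (A (f T s)).toOuterMeasure E
          ≤ u s * 1 := mul_le_mul_right (pmf_measure_le_one _ _) _
        _ ≤ u s * (∑ i ∈ Δ, if i ∈ s.1 then (1:ℝ≥0∞) else 0) := mul_le_mul_right h1 _
        _ ≤ _ := le_add_self
  calc ∑' s : ST, u s * (A (f T s)).toOuterMeasure E
      ≤ ∑' s : ST, (u s * (A (f T' s)).toOuterMeasure E
          + u s * (∑ i ∈ Δ, if i ∈ s.1 then (1:ℝ≥0∞) else 0)) :=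
        ENNReal.tsum_le_tsum hind
    _ = (∑' s : ST, u s * (A (f T' s)).toOuterMeasure E)
          + ∑' s : ST, u s * (∑ i ∈ Δ, if i ∈ s.1 then (1:ℝ≥0∞) else 0) :=
        ENNReal.tsum_add
    _ ≤ _ := by
        refine add_le_add_right ?_ _
        have e1 : ∀ s : ST, u s * (∑ i ∈ Δ, if i ∈ s.1 then (1:ℝ≥0∞) else 0)
            = ∑ i ∈ Δ, (if i ∈ s.1 then u s else 0) := by
          intro s
          rw [Finset.mul_sum]
          exact Finset.sum_congr rfl fun i _ => by rw [mul_ite, mul_one, mul_zero]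
        rw [tsum_congr e1, Summable.tsum_finsetSum (fun i _ => ENNReal.summable)]
        have e2 : ∀ i ∈ Δ, (∑' s : ST, if i ∈ s.1 then u s else 0) ≤ (n : ℝ≥0∞) / m := by
          intro i _
          have := uniform_mem_prob m n hn hm i
          rw [PMF.toOuterMeasure_apply, tsum_fintype] at this
          rw [tsum_fintype]
          refine le_trans (le_of_eq (Finset.sum_congr rfl fun s _ => ?_)) this
          rw [Set.indicator_apply]
          simp only [Set.mem_setOf_eq]
          rfl
        calc ∑ i ∈ Δ, (∑' s : ST, if i ∈ s.1 then u s else 0)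
            ≤ ∑ _i ∈ Δ, (n : ℝ≥0∞) / m := Finset.sum_le_sum e2
          _ = (Δ.card : ℝ≥0∞) * ((n : ℝ≥0∞) / m) := by
              rw [Finset.sum_const, nsmul_eq_mul]

end Helpers

/-- If `A' := A ∘ Φ_{m→n}` `(ε, δ)`-learns `𝒞` over `D` with
`η`-fixed-rate nasty noise, then `A'` `(ε, δ + n/√m + n/m)`-learns `𝒞` over `D` with
(standard) `η`-nasty noise. -/
theorem fixed_rate_to_standard_nasty
    {X : Type*} [Fintype X] [Nonempty X]
    (D : PMF X) (𝒞 : Set (X → Bool)) (ε δ η : ℝ)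
    (hε : 0 < ε) (hδ : 0 < δ) (hη : 0 < η) (hη1 : η ≤ 1)
    (n m : ℕ) (hnm : n < m) (A : Learner X n)
    (hA : LearnsPACFixed D 𝒞 (fun T => (subsample hnm.le T).bind A) η ε δ) :
    LearnsPAC D 𝒞 (fun T => (subsample hnm.le T).bind A) η ε
      (δ + (n : ℝ) / Real.sqrt m + (n : ℝ) / m) := by
  classical
  intro c hc st
  have hm1 : 1 ≤ m := by omega
  have hm0 : (0:ℝ) < m := by exact_mod_cast hm1
  set k := Nat.floor (η * m) with hkdef
  have hk_le : (k:ℝ) ≤ η * m := Nat.floor_le (by positivity)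
  have hkm : k ≤ m := by
    have h1 : (k:ℝ) ≤ (m:ℝ) := hk_le.trans (by nlinarith)
    exact_mod_cast h1
  have hk1 : η * m ≤ (k:ℝ) + 1 := (Nat.lt_floor_add_one (η * m)).le
  -- adjusted corruption sets
  have hadj : ∀ Z : Finset (Fin m), ∃ Wz : Finset (Fin m),
      Wz.card = k ∧ (k ≤ Z.card → Wz ⊆ Z) ∧ (Z.card < k → Z ⊆ Wz) := by
    intro Z
    rcases le_or_gt k Z.card with h | h
    · obtain ⟨Wz, hWZ, hW⟩ := Finset.exists_subset_card_eq h
      exact ⟨Wz, hW, fun _ => hWZ, fun h' => absurd h (not_le.mpr h')⟩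
    · obtain ⟨Wz, hZW, hW⟩ := Finset.exists_superset_card_eq h.le (by simpa using hkm)
      exact ⟨Wz, hW, fun h' => absurd h' (not_le.mpr h), fun _ => hZW⟩
  choose W hWcard hWsub hWsup using hadj
  set F : (Fin m → X × Bool) × Finset (Fin m) × (Fin m → X × Bool) →
      (Fin m → X × Bool) × Finset (Fin m) × (Fin m → X × Bool) :=
    fun t => (t.1, W t.2.1, fun i => if i ∈ W t.2.1 then t.2.2 i else t.1 i) with hF
  set μ' := st.μ.map F with hμ'
  have hmc : ∀ sa : Fin m → X × Bool, μ'.map (fun t => t.1) sa = ∏ i, labeled D c (sa i) := by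
    intro sa
    rw [hμ', PMF.map_comp]
    exact st.marg_clean sa
  have hce : ∀ t ∈ μ'.support, t.2.1.card = Nat.floor (η * m) := by
    intro t ht
    rw [hμ', PMF.support_map] at ht
    obtain ⟨t0, -, rfl⟩ := ht
    exact hWcard _
  have hco : ∀ t ∈ μ'.support, ∀ i : Fin m, i ∉ t.2.1 → t.2.2 i = t.1 i := by
    intro t ht i hi
    rw [hμ', PMF.support_map] at ht
    obtain ⟨t0, -, rfl⟩ := ht
    exact if_neg hi
  set bad := {h : X → Bool | ENNReal.ofReal ε < errD D h c} with hbad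
  set G : (Fin m → X × Bool) × Finset (Fin m) × (Fin m → X × Bool) → PMF (X → Bool) :=
    fun t => (subsample hnm.le t.2.2).bind A with hG
  have hfix : (μ'.bind G).toOuterMeasure bad ≤ ENNReal.ofReal δ :=
    hA c hc ⟨μ', hmc, hce, hco⟩
  rw [hμ', PMF.bind_map, PMF.toOuterMeasure_bind_apply] at hfix
  simp only [Function.comp_apply] at hfix
  show (st.μ.bind G).toOuterMeasure bad ≤ _
  rw [PMF.toOuterMeasure_bind_apply]
  have hper : ∀ t, st.μ t * (G t).toOuterMeasure bad
      ≤ st.μ t * (G (F t)).toOuterMeasure bad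
        + st.μ t * (((t.2.1.card - k : ℕ) : ℝ≥0∞) * ((n:ℝ≥0∞)/m)) := by
    intro t
    by_cases hμt : st.μ t = 0
    · simp [hμt]
    · have hts : t ∈ st.μ.support := by rwa [PMF.mem_support_iff]
      have hcons := st.consistent t hts
      have hΔ : ∀ i, t.2.2 i ≠ (F t).2.2 i → i ∈ t.2.1 \ W t.2.1 := by
        intro i hne
        rw [Finset.mem_sdiff]
        by_cases hiW : i ∈ W t.2.1
        · exact absurd (show t.2.2 i = (F t).2.2 i from (if_pos hiW).symm) hne
        · refine ⟨?_, hiW⟩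
          by_contra hiZ
          exact hne (((if_neg hiW).trans (hcons i hiZ).symm).symm)
      have hcard : (t.2.1 \ W t.2.1).card ≤ t.2.1.card - k := by
        rcases le_or_gt k t.2.1.card with h | h
        · rw [Finset.card_sdiff_of_subset (hWsub _ h), hWcard]
        · rw [Finset.sdiff_eq_empty_iff_subset.mpr (hWsup _ h)]
          simp
      have hcomp := subsample_compare hnm.le hm1 A t.2.2 (F t).2.2
        (t.2.1 \ W t.2.1) hΔ bad
      refine le_trans (mul_le_mul_right hcomp _) ?_
      rw [mul_add]
      refine add_le_add_right (mul_le_mul_right ?_ _) _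
      exact mul_le_mul_left (by exact_mod_cast Nat.cast_le.mpr hcard) _
  refine le_trans (ENNReal.tsum_le_tsum hper) ?_
  rw [ENNReal.tsum_add]
  have hsecond : (∑' t, st.μ t * (((t.2.1.card - k : ℕ) : ℝ≥0∞) * ((n:ℝ≥0∞)/m)))
      ≤ ENNReal.ofReal (Real.sqrt m + 1) * ((n:ℝ≥0∞)/m) := by
    rw [pmf_map_exp st.μ (fun t => t.2.1.card)
      (fun j => ((j - k : ℕ) : ℝ≥0∞) * ((n:ℝ≥0∞)/m))]
    have e : ∀ j : ℕ, (st.μ.map fun t => t.2.1.card) j * (((j - k : ℕ) : ℝ≥0∞) * ((n:ℝ≥0∞)/m))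
        = binomProb m η j * ((j - k : ℕ) : ℝ≥0∞) * ((n:ℝ≥0∞)/m) := by
      intro j
      rw [st.marg_card j, mul_assoc]
    rw [tsum_congr e, ENNReal.tsum_mul_right]
    exact mul_le_mul_left (binomProb_exp_bound m k η hη.le hη1 hk1) _
  refine le_trans (add_le_add hfix hsecond) ?_
  have hdivm : ((n:ℝ≥0∞)/m) = ENNReal.ofReal ((n:ℝ)/m) := by
    rw [ENNReal.ofReal_div_of_pos hm0, ENNReal.ofReal_natCast, ENNReal.ofReal_natCast]
  have hsq : Real.sqrt m * Real.sqrt m = m := Real.mul_self_sqrt hm0.le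
  have hsqpos : 0 < Real.sqrt m := Real.sqrt_pos.mpr hm0
  rw [hdivm, ← ENNReal.ofReal_mul (by positivity), ← ENNReal.ofReal_add hδ.le (by positivity)]
  refine ENNReal.ofReal_le_ofReal ?_
  have hkey : (Real.sqrt m + 1) * ((n:ℝ)/m) = (n:ℝ)/Real.sqrt m + (n:ℝ)/m := by
    field_simp
    linear_combination (n:ℝ)*hsq
  rw [hkey]
  linarith
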